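/- arXiv:1810.02960 — 3 statements merged into one kernel-verified Lean document; each statement's English description precedes it below -/
import Mathlib

section
/- Let Q be a symmetric bilinear form on a finite-dimensional real vector space V2, let A : V2 → ℝⁿ be a linear map, let N ⊆ ℝⁿ be a subspace, and let V1 ⊆ V2 be a subspace. Write V_i^N = V_i ∩ A⁻¹(N) for i = 1, 2, and let N^⊥ ⊆ (ℝⁿ)* denote the annihilator of N. Then {v ∈ V2^N : Q(v, w) = 0 for all w ∈ V1^N} = {v ∈ V2^N : there exists ξ ∈ N^⊥ with ξ(A w) + Q(v, w) = 0 for all w ∈ V1}; i.e., the Q-orthogonal complement of V1^N inside V2^N consists exactly of those v ∈ V2^N for which a Lagrange multiplier ξ annihilating N exists for the equation ξ(A w) + Q(v, w) = 0 tested against all w ∈ V1. -/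
open Module Submodule

/- STATEMENT 4 -/
theorem stmt_4 {V2 : Type*} [AddCommGroup V2] [Module ℝ V2] [FiniteDimensional ℝ V2]
    {n : ℕ} (Q : V2 →ₗ[ℝ] V2 →ₗ[ℝ] ℝ) (hQ : ∀ x y : V2, Q x y = Q y x)
    (A : V2 →ₗ[ℝ] (Fin n → ℝ)) (N : Submodule ℝ (Fin n → ℝ)) (V1 : Submodule ℝ V2) :
    {v : V2 | v ∈ Submodule.comap A N ∧ ∀ w ∈ V1 ⊓ Submodule.comap A N, Q v w = 0} =
    {v : V2 | v ∈ Submodule.comap A N ∧ ∃ ξ : Module.Dual ℝ (Fin n → ℝ),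
      (∀ x ∈ N, ξ x = 0) ∧ ∀ w ∈ V1, ξ (A w) + Q v w = 0} := by
  ext v
  simp only [Set.mem_setOf_eq]
  constructor
  · rintro ⟨hv, horth⟩
    refine ⟨hv, ?_⟩
    -- the map from V1 to ℝⁿ/N
    set f : V1 →ₗ[ℝ] ((Fin n → ℝ) ⧸ N) := N.mkQ ∘ₗ A ∘ₗ V1.subtype with hf
    set φ : V1 →ₗ[ℝ] ℝ := -((Q v) ∘ₗ V1.subtype) with hφ
    have hker : LinearMap.ker f ≤ LinearMap.ker φ := by
      intro w hw
      simp only [LinearMap.mem_ker, hf, LinearMap.comp_apply, Submodule.mkQ_apply,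
        Submodule.Quotient.mk_eq_zero] at hw
      simp only [LinearMap.mem_ker, hφ, LinearMap.neg_apply, LinearMap.comp_apply,
        Submodule.subtype_apply, neg_eq_zero]
      exact horth w ⟨w.2, hw⟩
    -- factor φ through range f
    let e := f.quotKerEquivRange
    let g : LinearMap.range f →ₗ[ℝ] ℝ := ((LinearMap.ker f).liftQ φ hker) ∘ₗ e.symm.toLinearMap
    obtain ⟨G, hG⟩ := LinearMap.exists_extend g
    refine ⟨G ∘ₗ N.mkQ, ?_, ?_⟩
    · intro x hx
      have hx0 : (Submodule.Quotient.mk x : (Fin n → ℝ) ⧸ N) = 0 :=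
        (Submodule.Quotient.mk_eq_zero N).mpr hx
      simp only [LinearMap.comp_apply, Submodule.mkQ_apply, hx0, map_zero]
    · intro w hw
      have h1 : f ⟨w, hw⟩ ∈ LinearMap.range f := ⟨⟨w, hw⟩, rfl⟩
      have h2 : G (f ⟨w, hw⟩) = g ⟨f ⟨w, hw⟩, h1⟩ := by
        have := congrFun (congrArg DFunLike.coe hG) ⟨f ⟨w, hw⟩, h1⟩
        simpa using this
      have h3 : e ((LinearMap.ker f).mkQ ⟨w, hw⟩) = ⟨f ⟨w, hw⟩, h1⟩ := by
        apply Subtype.ext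
        rfl
      have h4 : g ⟨f ⟨w, hw⟩, h1⟩ = φ ⟨w, hw⟩ := by
        simp only [g, LinearMap.comp_apply]
        rw [← h3]
        simp
      have : (G ∘ₗ N.mkQ) (A w) = φ ⟨w, hw⟩ := by
        simpa [hf] using h2.trans h4
      rw [this]
      simp [hφ]
  · rintro ⟨hv, ξ, hξN, hξ⟩
    refine ⟨hv, ?_⟩
    rintro w ⟨hw1, hw2⟩
    have := hξ w hw1
    rw [hξN (A w) hw2] at this
    linarith
end

section
/- Let Q be a symmetric bilinear form on a finite-dimensional real vector space V2, let A : V2 → ℝⁿ be a linear map, let N ⊆ ℝⁿ be a subspace, and let V1 ⊆ V2 be a subspace. Write V_i^N = V_i ∩ A⁻¹(N) for i = 1, 2, and let N^⊥ ⊆ (ℝⁿ)* denote the annihilator of N. Then {v ∈ V1^N : Q(v, w) = 0 for all w ∈ V2^N} = {v ∈ V1^N : there exists ξ ∈ N^⊥ with ξ(A w) + Q(v, w) = 0 for all w ∈ V2}. -/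
open Module Submodule

/- STATEMENT 5 -/
theorem stmt_5 {V2 : Type*} [AddCommGroup V2] [Module ℝ V2] [FiniteDimensional ℝ V2]
    {n : ℕ} (Q : V2 →ₗ[ℝ] V2 →ₗ[ℝ] ℝ) (hQ : ∀ x y : V2, Q x y = Q y x)
    (A : V2 →ₗ[ℝ] (Fin n → ℝ)) (N : Submodule ℝ (Fin n → ℝ)) (V1 : Submodule ℝ V2) :
    {v : V2 | v ∈ V1 ⊓ Submodule.comap A N ∧ ∀ w ∈ Submodule.comap A N, Q v w = 0} =
    {v : V2 | v ∈ V1 ⊓ Submodule.comap A N ∧ ∃ ξ : Module.Dual ℝ (Fin n → ℝ),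
      (∀ x ∈ N, ξ x = 0) ∧ ∀ w : V2, ξ (A w) + Q v w = 0} := by
  ext v
  simp only [Set.mem_setOf_eq]
  constructor
  · rintro ⟨hv, horth⟩
    refine ⟨hv, ?_⟩
    -- B : V2 → ℝⁿ/N
    set B : V2 →ₗ[ℝ] (Fin n → ℝ) ⧸ N := N.mkQ.comp A with hB
    have hle : LinearMap.ker B ≤ LinearMap.ker (Q v) := by
      intro w hw
      have : A w ∈ N := by
        simpa [hB, Submodule.Quotient.mk_eq_zero] using hw
      exact horth w (Submodule.mem_comap.mpr this)
    set h : V2 ⧸ LinearMap.ker B →ₗ[ℝ] ℝ := (LinearMap.ker B).liftQ (Q v) hle with hh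
    set e := B.quotKerEquivRange with he
    obtain ⟨g, hg⟩ := LinearMap.exists_extend (h.comp e.symm.toLinearMap)
    refine ⟨-(g.comp N.mkQ), ?_, ?_⟩
    · intro x hx
      simp [Submodule.Quotient.mk_eq_zero, (Submodule.Quotient.mk_eq_zero N).mpr hx]
    · intro w
      have hmem : B w ∈ LinearMap.range B := LinearMap.mem_range_self B w
      have key : g (N.mkQ (A w)) = Q v w := by
        have h1 : e (Submodule.Quotient.mk w) = ⟨B w, hmem⟩ := by
          apply Subtype.ext
          simpa [he] using B.quotKerEquivRange_apply_mk w
        have h2 : e.symm ⟨B w, hmem⟩ = Submodule.Quotient.mk w :=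
          e.symm_apply_eq.mpr h1.symm
        have := LinearMap.congr_fun hg ⟨B w, hmem⟩
        simp only [LinearMap.comp_apply, Submodule.subtype_apply,
          LinearEquiv.coe_coe] at this
        have hBw : (⟨B w, hmem⟩ : LinearMap.range B).1 = N.mkQ (A w) := rfl
        rw [← hBw, this, h2, hh]
        simp [Submodule.liftQ_apply]
      simp only [Submodule.mkQ_apply] at key
      simp [key]
  · rintro ⟨hv, ξ, hξN, hξ⟩
    refine ⟨hv, fun w hw => ?_⟩
    have := hξ w
    have h0 : ξ (A w) = 0 := hξN _ (Submodule.mem_comap.mp hw)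
    linarith
end

section
/- Let Λ1, Π, Λ2 be Lagrangian subspaces of a symplectic vector space Σ and let Γ ⊆ Λ1 ∩ Λ2 be a subspace (necessarily isotropic). Then Π^Γ := (Π ∩ Γ^∠) + Γ is a Lagrangian subspace of Σ and ind_Π(Λ1, Λ2) = ind_{Π^Γ}(Λ1, Λ2). -/
open Module Submodule

/-- The skew-orthogonal complement (with respect to a bilinear form `σ`)
of a subspace `Γ`: all vectors `x` with `σ x y = 0` for all `y ∈ Γ`. -/
def skewCompl {E : Type*} [AddCommGroup E] [Module ℝ E]
    (σ : E →ₗ[ℝ] E →ₗ[ℝ] ℝ) (Γ : Submodule ℝ E) : Submodule ℝ E where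
  carrier := {x | ∀ y ∈ Γ, σ x y = 0}
  zero_mem' := by intro y hy; simp
  add_mem' := by
    intro a b ha hb y hy
    have h1 := ha y hy
    have h2 := hb y hy
    simp only [map_add, LinearMap.add_apply]
    rw [h1, h2, add_zero]
  smul_mem' := by
    intro c a ha y hy
    have h1 := ha y hy
    simp only [map_smul, LinearMap.smul_apply, smul_eq_mul]
    rw [h1, mul_zero]

/-- A subspace is Lagrangian if it coincides with its skew-orthogonal complement. -/
def IsLagrangian {E : Type*} [AddCommGroup E] [Module ℝ E]
    (σ : E →ₗ[ℝ] E →ₗ[ℝ] ℝ) (Λ : Submodule ℝ E) : Prop :=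
  Λ = skewCompl σ Λ

/-- The positive inertia index of the quadratic form `q` on `(Λ1 + Λ2) ∩ P` given by
`q (λ1 + λ2) = σ λ1 λ2` (`λi ∈ Λi`). -/
noncomputable def posIndPair {E : Type*} [AddCommGroup E] [Module ℝ E]
    (σ : E →ₗ[ℝ] E →ₗ[ℝ] ℝ) (P Λ1 Λ2 : Submodule ℝ E) : ℕ :=
  sSup {k | ∃ W : Submodule ℝ E, W ≤ (Λ1 ⊔ Λ2) ⊓ P ∧
    (∀ x ∈ W, x ≠ 0 → ∀ x1 ∈ Λ1, ∀ x2 ∈ Λ2, x = x1 + x2 → 0 < σ x1 x2) ∧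
    Module.finrank ℝ W = k}

/-- The positive Maslov index of the triple `(Λ1, P, Λ2)` of Lagrangian subspaces:
`ind_P (Λ1, Λ2) = ind⁺ q + (dim (Λ1 ∩ P) + dim (Λ2 ∩ P)) / 2 - dim (Λ1 ∩ Λ2 ∩ P)`. -/
noncomputable def maslovInd {E : Type*} [AddCommGroup E] [Module ℝ E]
    (σ : E →ₗ[ℝ] E →ₗ[ℝ] ℝ) (P Λ1 Λ2 : Submodule ℝ E) : ℚ :=
  (posIndPair σ P Λ1 Λ2 : ℚ)
    + ((Module.finrank ℝ ↥(Λ1 ⊓ P) : ℚ) + (Module.finrank ℝ ↥(Λ2 ⊓ P) : ℚ)) / 2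
    - (Module.finrank ℝ ↥(Λ1 ⊓ Λ2 ⊓ P) : ℚ)

section Aux

variable {E : Type*} [AddCommGroup E] [Module ℝ E]

lemma mem_skewCompl {σ : E →ₗ[ℝ] E →ₗ[ℝ] ℝ} {Γ : Submodule ℝ E} {x : E} :
    x ∈ skewCompl σ Γ ↔ ∀ y ∈ Γ, σ x y = 0 := Iff.rfl

lemma sigma_refl {σ : E →ₗ[ℝ] E →ₗ[ℝ] ℝ} (halt : ∀ x : E, σ x x = 0) {x y : E}
    (h : σ x y = 0) : σ y x = 0 := by
  have h2 := halt (x + y)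
  simp only [map_add, LinearMap.add_apply, halt x, halt y] at h2
  linarith

lemma skewCompl_eq_orthogonal (σ : E →ₗ[ℝ] E →ₗ[ℝ] ℝ) (halt : ∀ x : E, σ x x = 0)
    (Γ : Submodule ℝ E) :
    skewCompl σ Γ = LinearMap.BilinForm.orthogonal σ Γ := by
  ext x
  simp only [mem_skewCompl, LinearMap.BilinForm.mem_orthogonal_iff,
    LinearMap.BilinForm.isOrtho_def]
  exact ⟨fun h y hy => sigma_refl halt (h y hy), fun h y hy => sigma_refl halt (h y hy)⟩

lemma skewCompl_anti (σ : E →ₗ[ℝ] E →ₗ[ℝ] ℝ) {A B : Submodule ℝ E} (h : A ≤ B) :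
    skewCompl σ B ≤ skewCompl σ A := fun _ hx y hy => hx y (h hy)

lemma skewCompl_sup (σ : E →ₗ[ℝ] E →ₗ[ℝ] ℝ) (A B : Submodule ℝ E) :
    skewCompl σ (A ⊔ B) = skewCompl σ A ⊓ skewCompl σ B := by
  ext x
  simp only [mem_skewCompl, Submodule.mem_inf]
  constructor
  · intro h
    exact ⟨fun y hy => h y (Submodule.mem_sup_left hy), fun y hy => h y (Submodule.mem_sup_right hy)⟩
  · rintro ⟨h1, h2⟩ y hy
    obtain ⟨a, ha, b, hb, rfl⟩ := Submodule.mem_sup.mp hy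
    rw [map_add, h1 a ha, h2 b hb, add_zero]

variable [FiniteDimensional ℝ E]

lemma skewCompl_skewCompl (σ : E →ₗ[ℝ] E →ₗ[ℝ] ℝ) (halt : ∀ x : E, σ x x = 0)
    (hnondeg : ∀ x : E, (∀ y : E, σ x y = 0) → x = 0) (Γ : Submodule ℝ E) :
    skewCompl σ (skewCompl σ Γ) = Γ := by
  rw [skewCompl_eq_orthogonal σ halt, skewCompl_eq_orthogonal σ halt]
  exact LinearMap.BilinForm.orthogonal_orthogonal (B := σ)
    ⟨hnondeg, fun y hy => hnondeg y (fun x => sigma_refl halt (hy x))⟩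
    (fun x y => sigma_refl halt) Γ

lemma skewCompl_inf (σ : E →ₗ[ℝ] E →ₗ[ℝ] ℝ) (halt : ∀ x : E, σ x x = 0)
    (hnondeg : ∀ x : E, (∀ y : E, σ x y = 0) → x = 0) (A B : Submodule ℝ E) :
    skewCompl σ (A ⊓ B) = skewCompl σ A ⊔ skewCompl σ B := by
  conv_lhs => rw [← skewCompl_skewCompl σ halt hnondeg A,
    ← skewCompl_skewCompl σ halt hnondeg B, ← skewCompl_sup]
  exact skewCompl_skewCompl σ halt hnondeg _

end Aux

/- STATEMENT 11 -/
theorem stmt_11 {E : Type*} [AddCommGroup E] [Module ℝ E] [FiniteDimensional ℝ E]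
    (σ : E →ₗ[ℝ] E →ₗ[ℝ] ℝ)
    (halt : ∀ x : E, σ x x = 0)
    (hnondeg : ∀ x : E, (∀ y : E, σ x y = 0) → x = 0)
    (P Λ1 Λ2 : Submodule ℝ E)
    (hP : IsLagrangian σ P) (hΛ1 : IsLagrangian σ Λ1) (hΛ2 : IsLagrangian σ Λ2)
    (Γ : Submodule ℝ E) (hΓ : Γ ≤ Λ1 ⊓ Λ2) :
    IsLagrangian σ ((P ⊓ skewCompl σ Γ) ⊔ Γ) ∧
    maslovInd σ P Λ1 Λ2 = maslovInd σ ((P ⊓ skewCompl σ Γ) ⊔ Γ) Λ1 Λ2 := by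
  have hrefl : ∀ x y : E, σ x y = 0 → σ y x = 0 := fun x y h => sigma_refl halt h
  have hΓ1 : Γ ≤ Λ1 := hΓ.trans inf_le_left
  have hΓ2 : Γ ≤ Λ2 := hΓ.trans inf_le_right
  have hΛ1sk : Λ1 ≤ skewCompl σ Γ := by
    conv_lhs => rw [hΛ1]
    exact skewCompl_anti σ hΓ1
  have hΛ2sk : Λ2 ≤ skewCompl σ Γ := by
    conv_lhs => rw [hΛ2]
    exact skewCompl_anti σ hΓ2
  have hΓΓ : Γ ≤ skewCompl σ Γ := hΓ1.trans hΛ1sk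
  have hlag : IsLagrangian σ ((P ⊓ skewCompl σ Γ) ⊔ Γ) := by
    unfold IsLagrangian
    rw [skewCompl_sup, skewCompl_inf σ halt hnondeg, skewCompl_skewCompl σ halt hnondeg, ← hP,
      sup_comm P Γ, sup_inf_assoc_of_le _ hΓΓ, sup_comm]
  refine ⟨hlag, ?_⟩
  have hmod : ∀ A : Submodule ℝ E, Γ ≤ A → A ≤ skewCompl σ Γ →
      A ⊓ ((P ⊓ skewCompl σ Γ) ⊔ Γ) = (A ⊓ P) ⊔ Γ := by
    intro A hGA hAsk
    rw [sup_comm (P ⊓ skewCompl σ Γ) Γ, inf_comm A, sup_inf_assoc_of_le _ hGA,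
      inf_assoc, show skewCompl σ Γ ⊓ A = A from inf_eq_right.mpr hAsk,
      inf_comm P A, sup_comm]
  have h1 := hmod Λ1 hΓ1 hΛ1sk
  have h2 := hmod Λ2 hΓ2 hΛ2sk
  have h12 := hmod (Λ1 ⊓ Λ2) hΓ (inf_le_left.trans hΛ1sk)
  have h12' := hmod (Λ1 ⊔ Λ2) (hΓ1.trans le_sup_left) (sup_le hΛ1sk hΛ2sk)
  have hdim : ∀ A : Submodule ℝ E, Γ ≤ A →
      finrank ℝ ↥((A ⊓ P) ⊔ Γ) + finrank ℝ ↥(P ⊓ Γ)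
        = finrank ℝ ↥(A ⊓ P) + finrank ℝ ↥Γ := by
    intro A hGA
    have h := Submodule.finrank_sup_add_finrank_inf_eq (A ⊓ P) Γ
    rwa [inf_right_comm, show A ⊓ Γ = Γ from inf_eq_right.mpr hGA, inf_comm Γ P] at h
  have hpos : posIndPair σ P Λ1 Λ2 = posIndPair σ ((P ⊓ skewCompl σ Γ) ⊔ Γ) Λ1 Λ2 := by
    unfold posIndPair
    congr 1
    ext k
    simp only [Set.mem_setOf_eq]
    constructor
    · rintro ⟨W, hW, hposW, hrk⟩
      refine ⟨W, le_inf (hW.trans inf_le_left) ?_, hposW, hrk⟩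
      exact le_trans
        (le_inf (hW.trans inf_le_right)
          ((hW.trans inf_le_left).trans (sup_le hΛ1sk hΛ2sk))) le_sup_left
    · rintro ⟨W', hW', hposW', hrk⟩
      set D := (Λ1 ⊔ Λ2) ⊓ P with hDdef
      have hW'D : W' ≤ D ⊔ Γ := hW'.trans h12'.le
      have hW'Γ : W' ⊓ Γ = ⊥ := by
        rw [eq_bot_iff]
        intro x hx
        rw [Submodule.mem_inf] at hx
        rw [Submodule.mem_bot]
        by_contra hx0
        have := hposW' x hx.1 hx0 x (hΓ1 hx.2) 0 (Submodule.zero_mem _) (by rw [add_zero])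
        simp at this
      obtain ⟨C₀, hC₀⟩ := Submodule.exists_isCompl (Submodule.comap Γ.subtype (D ⊓ Γ))
      set C := Submodule.map Γ.subtype C₀ with hCdef
      have hCΓ : C ≤ Γ := Submodule.map_subtype_le _ _
      have hsupC : (D ⊓ Γ) ⊔ C = Γ := by
        have h := congrArg (Submodule.map Γ.subtype) hC₀.sup_eq_top
        rwa [Submodule.map_sup, Submodule.map_comap_subtype, Submodule.map_top,
          Submodule.range_subtype,
          show Γ ⊓ (D ⊓ Γ) = D ⊓ Γ from inf_eq_right.mpr inf_le_right] at h
      have hDC : D ⊓ C = ⊥ := by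
        rw [eq_bot_iff]
        intro x hx
        rw [Submodule.mem_inf] at hx
        obtain ⟨y, hyC₀, rfl⟩ := Submodule.mem_map.mp hx.2
        have hy : y ∈ Submodule.comap Γ.subtype (D ⊓ Γ) :=
          Submodule.mem_comap.mpr (Submodule.mem_inf.mpr ⟨hx.1, y.2⟩)
        have hy0 : y ∈ (⊥ : Submodule ℝ Γ) :=
          hC₀.disjoint.le_bot (Submodule.mem_inf.mpr ⟨hy, hyC₀⟩)
        rw [Submodule.mem_bot] at hy0
        simp [hy0]
      have hDCsup : D ⊔ C = D ⊔ Γ := by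
        apply le_antisymm (sup_le le_sup_left (hCΓ.trans le_sup_right))
        refine sup_le le_sup_left ?_
        rw [← hsupC]
        exact sup_le (inf_le_left.trans le_sup_left) le_sup_right
      refine ⟨(W' ⊔ C) ⊓ D, inf_le_right, ?_, ?_⟩
      · intro x hx hne x1 hx1 x2 hx2 hdec
        rw [Submodule.mem_inf] at hx
        obtain ⟨w, hw, c, hc, rfl⟩ := Submodule.mem_sup.mp hx.1
        have hcΓ : c ∈ Γ := hCΓ hc
        have hw0 : w ≠ 0 := by
          rintro rfl
          have hcD : c ∈ D := by simpa using hx.2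
          have : c ∈ (⊥ : Submodule ℝ E) := hDC ▸ Submodule.mem_inf.mpr ⟨hcD, hc⟩
          rw [Submodule.mem_bot] at this
          exact hne (by simp [this])
        have key := hposW' w hw hw0 (x1 - c) (sub_mem hx1 (hΓ1 hcΓ)) x2 hx2
          (by rw [sub_add_eq_add_sub, ← hdec, add_sub_cancel_right])
        have hc2 : σ c x2 = 0 := hrefl _ _ (hΛ2sk hx2 c hcΓ)
        rwa [map_sub, LinearMap.sub_apply, hc2, sub_zero] at key
      · have hWC : W' ⊓ C = ⊥ := by
          rw [eq_bot_iff, ← hW'Γ]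
          exact inf_le_inf_left _ hCΓ
        have e1 := Submodule.finrank_sup_add_finrank_inf_eq W' C
        rw [hWC] at e1
        simp only [finrank_bot, add_zero] at e1
        have e2 := Submodule.finrank_sup_add_finrank_inf_eq (W' ⊔ C) D
        have e3 : (W' ⊔ C) ⊔ D = D ⊔ Γ := by
          apply le_antisymm
          · exact sup_le (sup_le hW'D (hCΓ.trans le_sup_right)) le_sup_left
          · rw [← hDCsup]
            exact sup_le le_sup_right (le_sup_right.trans le_sup_left)
        have e4 := Submodule.finrank_sup_add_finrank_inf_eq D C
        rw [hDC, hDCsup] at e4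
        simp only [finrank_bot, add_zero] at e4
        rw [e3, e1, e4] at e2
        omega
  have c1 := hdim Λ1 hΓ1
  have c2 := hdim Λ2 hΓ2
  have c12 := hdim (Λ1 ⊓ Λ2) hΓ
  have q1 : ((finrank ℝ ↥((Λ1 ⊓ P) ⊔ Γ)) : ℚ) + finrank ℝ ↥(P ⊓ Γ)
      = finrank ℝ ↥(Λ1 ⊓ P) + finrank ℝ ↥Γ := by exact_mod_cast c1
  have q2 : ((finrank ℝ ↥((Λ2 ⊓ P) ⊔ Γ)) : ℚ) + finrank ℝ ↥(P ⊓ Γ)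
      = finrank ℝ ↥(Λ2 ⊓ P) + finrank ℝ ↥Γ := by exact_mod_cast c2
  have q12 : ((finrank ℝ ↥((Λ1 ⊓ Λ2 ⊓ P) ⊔ Γ)) : ℚ) + finrank ℝ ↥(P ⊓ Γ)
      = finrank ℝ ↥(Λ1 ⊓ Λ2 ⊓ P) + finrank ℝ ↥Γ := by exact_mod_cast c12
  unfold maslovInd
  rw [hpos, h1, h2, h12]
  linarith [q1, q2, q12]
end
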